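/- With the sawtooth construction as above, let a_{n,k} := sup_{x' ∈ Q(n,k)} f_{n−1}(x'). Then for every n ∈ ℕ₀, k ∈ {0,…,2^{nm}−1}^{d-1}, and every x' ∈ Q(n,k) with 2^{nm}x' − k ∈ [1/4, 3/4]^{d-1}, one has f(x') − a_{n,k} ≥ (1/8)·2^{−γmn}. -/

import Mathlib

/-- The tent function `ψ(x') = (1/2 − ‖x' − (1/2,…,1/2)‖_∞)·1_{(0,1)^{n}}(x')`
(the norm on `Fin n → ℝ` is the sup norm). -/
noncomputable def sawPsi (n : ℕ) (x : Fin n → ℝ) : ℝ :=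
  Set.indicator {y : Fin n → ℝ | ∀ i, 0 < y i ∧ y i < 1}
    (fun y => 1 / 2 - ‖y - fun _ => (1 / 2 : ℝ)‖) x

/-- `g_j(x') = Σ_{k ∈ {0,…,2^{jm}−1}^{n}} ψ(2^{jm}·x' − k)`. -/
noncomputable def sawG (n m j : ℕ) (x : Fin n → ℝ) : ℝ :=
  ∑ k : Fin n → Fin (2 ^ (j * m)),
    sawPsi n (fun i => 2 ^ (j * m) * x i - (k i : ℝ))

/-- Partial sum `f_{N−1}(x') = Σ_{j=0}^{N−1} 2^{−γjm}·g_j(x')` (so `sawF n m γ 0 = f_{−1} ≡ 0`). -/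
noncomputable def sawFpartial (n m : ℕ) (γ : ℝ) (N : ℕ) (x : Fin n → ℝ) : ℝ :=
  ∑ j ∈ Finset.range N, (2 : ℝ) ^ (-(γ * ((j : ℝ) * m))) * sawG n m j x

/-- The sawtooth boundary function `f(x') = Σ_{j=0}^∞ 2^{−γjm}·g_j(x')`. -/
noncomputable def sawF (n m : ℕ) (γ : ℝ) (x : Fin n → ℝ) : ℝ :=
  ∑' j : ℕ, (2 : ℝ) ^ (-(γ * ((j : ℝ) * m))) * sawG n m j x

/-- The dyadic subcube `Q(n,k) = {x' : 2^{nm}·x' − k ∈ (0,1)^{d-1}}`. -/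
def sawQ (dd m n : ℕ) (k : Fin dd → Fin (2 ^ (n * m))) : Set (Fin dd → ℝ) :=
  {x | ∀ i, (k i : ℝ) < 2 ^ (n * m) * x i ∧ 2 ^ (n * m) * x i < (k i : ℝ) + 1}

/-- `a_{n,k} = sup_{x' ∈ Q(n,k)} f_{n−1}(x')`. -/
noncomputable def sawA (dd m : ℕ) (γ : ℝ) (n : ℕ) (k : Fin dd → Fin (2 ^ (n * m))) : ℝ :=
  sSup (sawFpartial dd m γ n '' sawQ dd m n k)


/-- closed form for the tent function. -/
lemma sawPsi_eq (n : ℕ) (x : Fin n → ℝ) :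
    sawPsi n x = max 0 (1 / 2 - ‖x - fun _ => (1 / 2 : ℝ)‖) := by
  unfold sawPsi
  by_cases h : ∀ i, 0 < x i ∧ x i < 1
  · rw [Set.indicator_of_mem (by exact h)]
    have hlt : ‖x - fun _ => (1 / 2 : ℝ)‖ < 1 / 2 := by
      rw [pi_norm_lt_iff (by norm_num : (0:ℝ) < 1/2)]
      intro i
      have h1 := (h i).1; have h2 := (h i).2
      simp only [Pi.sub_apply, Real.norm_eq_abs]
      rw [abs_lt]; constructor <;> linarith
    rw [max_eq_right (by linarith)]
  · rw [Set.indicator_of_notMem (by exact h)]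
    push_neg at h
    obtain ⟨i, hi⟩ := h
    have hge : (1 : ℝ) / 2 ≤ |x i - 1 / 2| := by
      by_cases h0 : 0 < x i
      · have := hi h0
        rw [le_abs]; left; linarith
      · push_neg at h0
        rw [le_abs]; right; linarith
    have : |x i - 1/2| ≤ ‖x - fun _ => (1 / 2 : ℝ)‖ := by
      have := norm_le_pi_norm (x - fun _ => (1 / 2 : ℝ)) i
      simpa using this
    rw [max_eq_left (by linarith)]

lemma sawPsi_nonneg (n : ℕ) (x : Fin n → ℝ) : 0 ≤ sawPsi n x := by
  rw [sawPsi_eq]; exact le_max_left _ _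

lemma sawPsi_le_half (n : ℕ) (x : Fin n → ℝ) : sawPsi n x ≤ 1 / 2 := by
  rw [sawPsi_eq]
  have := norm_nonneg (x - fun _ => (1 / 2 : ℝ))
  apply max_le <;> linarith

lemma sawPsi_lip (n : ℕ) (a b : Fin n → ℝ) : |sawPsi n a - sawPsi n b| ≤ ‖a - b‖ := by
  rw [sawPsi_eq, sawPsi_eq, max_comm 0 _, max_comm 0 _]
  refine le_trans (abs_max_sub_max_le_abs _ _ _) ?_
  have h1 : (1 / 2 - ‖a - fun _ => (1 / 2 : ℝ)‖) - (1 / 2 - ‖b - fun _ => (1 / 2 : ℝ)‖)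
      = ‖b - fun _ => (1 / 2 : ℝ)‖ - ‖a - fun _ => (1 / 2 : ℝ)‖ := by ring
  rw [h1]
  refine le_trans (abs_norm_sub_norm_le _ _) ?_
  have : (b - fun _ => (1 / 2 : ℝ)) - (a - fun _ => (1 / 2 : ℝ)) = b - a := by abel
  rw [this, norm_sub_rev]

lemma sawPsi_ne_zero_mem {n : ℕ} {x : Fin n → ℝ} (h : sawPsi n x ≠ 0) :
    ∀ i, 0 < x i ∧ x i < 1 := by
  by_contra hc
  exact h (Set.indicator_of_notMem (by exact hc) _)

lemma sawPsi_quarter {n : ℕ} {x : Fin n → ℝ} (h : ∀ i, x i ∈ Set.Icc (1/4 : ℝ) (3/4)) :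
    1 / 4 ≤ sawPsi n x := by
  rw [sawPsi_eq]
  have : ‖x - fun _ => (1 / 2 : ℝ)‖ ≤ 1 / 4 := by
    rw [pi_norm_le_iff_of_nonneg (by norm_num : (0:ℝ) ≤ 1/4)]
    intro i
    have h1 := (h i).1; have h2 := (h i).2
    simp only [Pi.sub_apply, Real.norm_eq_abs]
    rw [abs_le]; constructor <;> linarith

  refine le_trans ?_ (le_max_right _ _)
  linarith

lemma nat_squeeze {a b : ℕ} {t : ℝ} (h1 : (a:ℝ) < t) (h2 : t < a + 1)
    (h3 : (b:ℝ) < t) (h4 : t < b + 1) : a = b := by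
  have ha : (a:ℝ) < b + 1 := lt_trans h1 h4
  have hb : (b:ℝ) < a + 1 := lt_trans h3 h2
  have ha' : a < b + 1 := by exact_mod_cast ha
  have hb' : b < a + 1 := by exact_mod_cast hb
  omega

lemma sawG_nonneg (n m j : ℕ) (x : Fin n → ℝ) : 0 ≤ sawG n m j x :=
  Finset.sum_nonneg fun _ _ => sawPsi_nonneg _ _

lemma sawG_le_half (n m j : ℕ) (x : Fin n → ℝ) : sawG n m j x ≤ 1 / 2 := by
  by_cases h : ∃ k0 : Fin n → Fin (2 ^ (j * m)),
      sawPsi n (fun i => 2 ^ (j * m) * x i - (k0 i : ℝ)) ≠ 0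
  · obtain ⟨k0, hk0⟩ := h
    have heq : sawG n m j x = sawPsi n (fun i => 2 ^ (j * m) * x i - (k0 i : ℝ)) := by
      apply Finset.sum_eq_single_of_mem k0 (Finset.mem_univ _)
      intro k' _ hne
      by_contra h0
      apply hne
      have h1 := sawPsi_ne_zero_mem h0
      have h2 := sawPsi_ne_zero_mem hk0
      funext i
      apply Fin.ext
      exact nat_squeeze (a := (k' i : ℕ)) (b := (k0 i : ℕ)) (t := 2 ^ (j * m) * x i)
        (by linarith [(h1 i).1]) (by linarith [(h1 i).2])
        (by linarith [(h2 i).1]) (by linarith [(h2 i).2])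
    rw [heq]; exact sawPsi_le_half _ _
  · push_neg at h
    unfold sawG
    rw [Finset.sum_eq_zero fun k _ => h k]
    norm_num

lemma sawQ_scale {dd m n j : ℕ} (hj : j ≤ n) {k : Fin dd → Fin (2 ^ (n * m))}
    {x : Fin dd → ℝ} (hx : x ∈ sawQ dd m n k) (i : Fin dd) :
    (((k i : ℕ) / 2 ^ ((n - j) * m) : ℕ) : ℝ) < 2 ^ (j * m) * x i ∧
      2 ^ (j * m) * x i < (((k i : ℕ) / 2 ^ ((n - j) * m) : ℕ) : ℝ) + 1 := by
  set P : ℕ := 2 ^ ((n - j) * m) with hPdef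
  have hP : 0 < P := Nat.pow_pos (by norm_num)
  have hPR : (0:ℝ) < (P:ℝ) := by exact_mod_cast hP
  set K : ℕ := (k i : ℕ) / P with hKdef
  have hnm : n * m = j * m + (n - j) * m := by
    rw [← Nat.add_mul, Nat.add_sub_cancel' hj]
  have hpow : (2:ℝ) ^ (n * m) = 2 ^ (j * m) * (P:ℝ) := by
    rw [hnm, pow_add]; push_cast [hPdef]; ring
  obtain ⟨hlo, hhi⟩ := hx i
  rw [hpow] at hlo hhi
  have hAP : ((k i : ℕ) : ℝ) < (2 ^ (j * m) * x i) * (P:ℝ) := by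
    calc ((k i : ℕ) : ℝ) < 2 ^ (j * m) * (P:ℝ) * x i := hlo
    _ = (2 ^ (j * m) * x i) * (P:ℝ) := by ring
  have hAP' : (2 ^ (j * m) * x i) * (P:ℝ) < ((k i : ℕ) : ℝ) + 1 := by
    calc (2 ^ (j * m) * x i) * (P:ℝ) = 2 ^ (j * m) * (P:ℝ) * x i := by ring
    _ < ((k i : ℕ) : ℝ) + 1 := hhi
  constructor
  · have h1 : (K * P : ℕ) ≤ (k i : ℕ) := Nat.div_mul_le_self _ _
    have h1' : (K:ℝ) * (P:ℝ) ≤ ((k i : ℕ) : ℝ) := by exact_mod_cast h1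
    have := lt_of_le_of_lt h1' hAP
    exact (mul_lt_mul_iff_of_pos_right hPR).mp this
  · have h2 : (k i : ℕ) < (K + 1) * P := by
      rw [← Nat.div_lt_iff_lt_mul hP]
      exact Nat.lt_succ_self _
    have h2' : ((k i : ℕ) : ℝ) + 1 ≤ ((K:ℝ) + 1) * (P:ℝ) := by
      have : (k i : ℕ) + 1 ≤ (K + 1) * P := h2
      exact_mod_cast this
    have := lt_of_lt_of_le hAP' h2'
    exact (mul_lt_mul_iff_of_pos_right hPR).mp this

lemma sawK_lt {dd m n j : ℕ} (hj : j ≤ n) (k : Fin dd → Fin (2 ^ (n * m))) (i : Fin dd) :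
    (k i : ℕ) / 2 ^ ((n - j) * m) < 2 ^ (j * m) := by
  have hP : 0 < 2 ^ ((n - j) * m) := Nat.pow_pos (by norm_num)
  rw [Nat.div_lt_iff_lt_mul hP, ← pow_add, ← Nat.add_mul, Nat.add_sub_cancel' hj]
  exact (k i).isLt

lemma sawG_eq_on_Q {dd m n j : ℕ} (hj : j ≤ n) {k : Fin dd → Fin (2 ^ (n * m))}
    {x : Fin dd → ℝ} (hx : x ∈ sawQ dd m n k) :
    sawG dd m j x =
      sawPsi dd (fun i => 2 ^ (j * m) * x i - (((k i : ℕ) / 2 ^ ((n - j) * m) : ℕ) : ℝ)) := by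
  have hKf : ∀ i : Fin dd, (k i : ℕ) / 2 ^ ((n - j) * m) < 2 ^ (j * m) := sawK_lt hj k
  let K : Fin dd → Fin (2 ^ (j * m)) := fun i => ⟨(k i : ℕ) / 2 ^ ((n - j) * m), hKf i⟩
  have : sawG dd m j x = sawPsi dd (fun i => 2 ^ (j * m) * x i - (K i : ℝ)) := by
    apply Finset.sum_eq_single_of_mem K (Finset.mem_univ _)
    intro k' _ hne
    by_contra h0
    apply hne
    have h1 := sawPsi_ne_zero_mem h0
    funext i
    apply Fin.ext
    have hs := sawQ_scale hj hx i
    exact nat_squeeze (a := (k' i : ℕ)) (t := 2 ^ (j * m) * x i)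
      (by linarith [(h1 i).1]) (by linarith [(h1 i).2]) hs.1 hs.2
  exact this

lemma sawG_osc {dd m n j : ℕ} (hj : j ≤ n) {k : Fin dd → Fin (2 ^ (n * m))}
    {x y : Fin dd → ℝ} (hx : x ∈ sawQ dd m n k) (hy : y ∈ sawQ dd m n k) :
    |sawG dd m j x - sawG dd m j y| ≤ (2:ℝ) ^ (j * m) / 2 ^ (n * m) := by
  rw [sawG_eq_on_Q hj hx, sawG_eq_on_Q hj hy]
  refine le_trans (sawPsi_lip _ _ _) ?_
  have hnm : (0:ℝ) < 2 ^ (n * m) := by positivity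
  have hjm : (0:ℝ) < 2 ^ (j * m) := by positivity
  rw [pi_norm_le_iff_of_nonneg (by positivity)]
  intro i
  simp only [Pi.sub_apply, Real.norm_eq_abs]
  have h1 : (2:ℝ) ^ (j * m) * x i - (((k i : ℕ) / 2 ^ ((n - j) * m) : ℕ) : ℝ) -
      ((2:ℝ) ^ (j * m) * y i - (((k i : ℕ) / 2 ^ ((n - j) * m) : ℕ) : ℝ))
      = 2 ^ (j * m) * (x i - y i) := by ring
  rw [h1]
  obtain ⟨hx1, hx2⟩ := hx i
  obtain ⟨hy1, hy2⟩ := hy i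
  have h2 : |(2:ℝ) ^ (n * m) * (x i - y i)| ≤ 1 := by
    rw [abs_le]; constructor <;> nlinarith
  rw [abs_mul, abs_of_pos hnm] at h2
  have habs : |x i - y i| ≤ 1 / 2 ^ (n * m) := by
    rw [le_div_iff₀ hnm]; linarith [mul_comm ((2:ℝ) ^ (n * m)) |x i - y i|]
  rw [abs_mul, abs_of_pos hjm]
  calc (2:ℝ) ^ (j * m) * |x i - y i| ≤ 2 ^ (j * m) * (1 / 2 ^ (n * m)) :=
        mul_le_mul_of_nonneg_left habs (le_of_lt hjm)
    _ = 2 ^ (j * m) / 2 ^ (n * m) := by ring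

lemma sawOsc_bound {m n : ℕ} {γ : ℝ} (hγ2 : γ < 1) (hm2 : 4 ≤ (m:ℝ) * (1 - γ)) :
    ∑ j ∈ Finset.range n, (2:ℝ) ^ (-(γ * ((j:ℝ) * m))) * ((2:ℝ) ^ (j*m) / 2 ^ (n*m)) ≤
      (1/8) * (2:ℝ) ^ (-(γ * ((m:ℝ) * n))) := by
  set r : ℝ := (2:ℝ) ^ ((1 - γ) * (m:ℝ)) with hrdef
  have hr16 : (16:ℝ) ≤ r := by
    have h4 : (2:ℝ) ^ (4:ℝ) ≤ (2:ℝ) ^ ((1-γ) * (m:ℝ)) :=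
      Real.rpow_le_rpow_of_exponent_le (by norm_num) (by nlinarith)
    have h16 : (2:ℝ) ^ (4:ℝ) = 16 := by
      rw [show (4:ℝ) = ((4:ℕ):ℝ) by norm_num, Real.rpow_natCast]; norm_num
    rw [hrdef, ← h16]; exact h4
  have hterm : ∀ j : ℕ, (2:ℝ) ^ (-(γ * ((j:ℝ) * m))) * ((2:ℝ) ^ (j*m) / 2 ^ (n*m))
      = r ^ j / 2 ^ (n*m) := by
    intro j
    have e1 : r ^ j = (2:ℝ) ^ ((1-γ) * (m:ℝ) * (j:ℝ)) := by
      rw [hrdef, ← Real.rpow_natCast ((2:ℝ) ^ ((1-γ) * (m:ℝ))) j,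
        ← Real.rpow_mul (by norm_num)]
    have e2 : (2:ℝ) ^ (j*m) = (2:ℝ) ^ (((j*m : ℕ)):ℝ) := (Real.rpow_natCast 2 (j*m)).symm
    rw [e1, e2, div_eq_mul_inv, div_eq_mul_inv, ← mul_assoc,
      ← Real.rpow_add (by norm_num : (0:ℝ) < 2)]
    congr 2
    push_cast; ring
  rw [Finset.sum_congr rfl (fun j _ => hterm j), ← Finset.sum_div,
    geom_sum_eq (by linarith : r ≠ 1)]
  have hnm : (0:ℝ) < 2 ^ (n*m) := by positivity
  have hrn : (0:ℝ) ≤ r ^ n := by positivity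
  have step1 : (r ^ n - 1) / (r - 1) ≤ r ^ n / 15 :=
    div_le_div₀ hrn (by linarith) (by norm_num) (by linarith)
  have key : r ^ n / 2 ^ (n*m) = (2:ℝ) ^ (-(γ * ((m:ℝ) * n))) := by
    have e1 : r ^ n = (2:ℝ) ^ ((1-γ) * (m:ℝ) * (n:ℝ)) := by
      rw [hrdef, ← Real.rpow_natCast ((2:ℝ) ^ ((1-γ) * (m:ℝ))) n,
        ← Real.rpow_mul (by norm_num)]
    have e2 : (2:ℝ) ^ (n*m) = (2:ℝ) ^ (((n*m : ℕ)):ℝ) := (Real.rpow_natCast 2 (n*m)).symm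
    rw [e1, e2, ← Real.rpow_sub (by norm_num)]
    congr 1; push_cast; ring
  have hX : (0:ℝ) < (2:ℝ) ^ (-(γ * ((m:ℝ) * n))) := Real.rpow_pos_of_pos (by norm_num) _
  calc (r ^ n - 1) / (r - 1) / 2 ^ (n*m) ≤ (r ^ n / 15) / 2 ^ (n*m) := by
        exact (div_le_div_iff_of_pos_right hnm).mpr step1
    _ = (1/15) * (r ^ n / 2 ^ (n*m)) := by ring
    _ = (1/15) * (2:ℝ) ^ (-(γ * ((m:ℝ) * n))) := by rw [key]
    _ ≤ (1/8) * (2:ℝ) ^ (-(γ * ((m:ℝ) * n))) := by nlinarith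

lemma sawFpartial_osc {dd m n : ℕ} {γ : ℝ} {k : Fin dd → Fin (2 ^ (n*m))}
    {x y : Fin dd → ℝ} (hx : x ∈ sawQ dd m n k) (hy : y ∈ sawQ dd m n k)
    (hγ2 : γ < 1) (hm2 : 4 ≤ (m:ℝ) * (1 - γ)) :
    |sawFpartial dd m γ n x - sawFpartial dd m γ n y| ≤
      (1/8) * (2:ℝ) ^ (-(γ * ((m:ℝ) * n))) := by
  refine le_trans ?_ (sawOsc_bound hγ2 hm2)
  unfold sawFpartial
  rw [← Finset.sum_sub_distrib]
  refine le_trans (Finset.abs_sum_le_sum_abs _ _) ?_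
  apply Finset.sum_le_sum
  intro j hj
  have hjn : j ≤ n := le_of_lt (Finset.mem_range.mp hj)
  rw [← mul_sub, abs_mul, abs_of_pos (Real.rpow_pos_of_pos (by norm_num : (0:ℝ) < 2) _)]
  exact mul_le_mul_of_nonneg_left (sawG_osc hjn hx hy)
    (le_of_lt (Real.rpow_pos_of_pos (by norm_num) _))


/-- Lemma 7.2(iii): on the middle part of each dyadic subcube
`Q(n,k)` (where `2^{nm}x' − k ∈ [1/4, 3/4]^{d-1}`), one has
`f(x') − a_{n,k} ≥ (1/8)·2^{−γmn}`. -/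
theorem sawF_sub_a_lower (d m : ℕ) (γ : ℝ) (hd : 2 ≤ d)
    (hγ1 : ((d : ℝ) - 1) / d < γ) (hγ2 : γ < 1)
    (hm1 : 1 ≤ (m : ℝ) * γ) (hm2 : 4 ≤ (m : ℝ) * (1 - γ))
    (n : ℕ) (k : Fin (d - 1) → Fin (2 ^ (n * m)))
    (x : Fin (d - 1) → ℝ) (hx : x ∈ sawQ (d - 1) m n k)
    (hmid : ∀ i, 2 ^ (n * m) * x i - (k i : ℝ) ∈ Set.Icc (1 / 4 : ℝ) (3 / 4)) :
    (1 / 8) * (2 : ℝ) ^ (-(γ * ((m : ℝ) * n))) ≤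
      sawF (d - 1) m γ x - sawA (d - 1) m γ n k := by
  have hd2 : (2:ℝ) ≤ d := by exact_mod_cast hd
  have hd1 : (0:ℝ) ≤ ((d:ℝ) - 1) / d := by
    apply div_nonneg <;> linarith
  have hγ0 : 0 < γ := lt_of_le_of_lt hd1 hγ1
  have hm0 : (0:ℝ) < m := by nlinarith [(Nat.cast_nonneg m : (0:ℝ) ≤ m)]
  set c : ℝ := (2:ℝ) ^ (-(γ * ((n:ℝ) * m))) with hcdef
  have hc' : c = (2:ℝ) ^ (-(γ * ((m:ℝ) * n))) := by rw [hcdef]; congr 1; ring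
  have hcpos : 0 < c := Real.rpow_pos_of_pos (by norm_num) _
  set r' : ℝ := (2:ℝ) ^ (-(γ * (m:ℝ))) with hr'def
  have hr'0 : 0 ≤ r' := le_of_lt (Real.rpow_pos_of_pos (by norm_num) _)
  have hr'1 : r' < 1 := Real.rpow_lt_one_of_one_lt_of_neg (by norm_num) (by nlinarith)
  have hcoef : ∀ j : ℕ, (2:ℝ) ^ (-(γ * ((j:ℝ) * m))) = r' ^ j := by
    intro j
    rw [hr'def, ← Real.rpow_natCast ((2:ℝ) ^ (-(γ * (m:ℝ)))) j,
      ← Real.rpow_mul (by norm_num)]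
    congr 1; ring
  have htermnn : ∀ j : ℕ, 0 ≤ (2:ℝ) ^ (-(γ * ((j:ℝ) * m))) * sawG (d-1) m j x :=
    fun j => mul_nonneg (le_of_lt (Real.rpow_pos_of_pos (by norm_num) _))
      (sawG_nonneg _ _ _ _)
  have hsum2 : Summable (fun j : ℕ => r' ^ j * (1/2)) :=
    (summable_geometric_of_lt_one hr'0 hr'1).mul_right (1/2)
  have hsum : Summable (fun j : ℕ => (2:ℝ) ^ (-(γ * ((j:ℝ) * m))) * sawG (d-1) m j x) := by
    refine Summable.of_nonneg_of_le htermnn (fun j => ?_) hsum2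
    rw [hcoef j]
    exact mul_le_mul_of_nonneg_left (sawG_le_half _ _ _ _) (by positivity)
  have h1 : sawFpartial (d-1) m γ (n+1) x ≤ sawF (d-1) m γ x :=
    Summable.sum_le_tsum _ (fun j _ => htermnn j) hsum
  have h2 : sawFpartial (d-1) m γ (n+1) x
      = sawFpartial (d-1) m γ n x + c * sawG (d-1) m n x := by
    unfold sawFpartial; rw [Finset.sum_range_succ]
  have h3 : 1/4 ≤ sawG (d-1) m n x := by
    refine le_trans (sawPsi_quarter (x := fun i => 2 ^ (n*m) * x i - (k i : ℝ)) hmid) ?_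
    unfold sawG
    exact Finset.single_le_sum
      (f := fun k' : Fin (d-1) → Fin (2 ^ (n*m)) =>
        sawPsi (d-1) (fun i => 2 ^ (n*m) * x i - (k' i : ℝ)))
      (fun _ _ => sawPsi_nonneg _ _) (Finset.mem_univ k)
  have h4 : sawA (d-1) m γ n k ≤ sawFpartial (d-1) m γ n x + (1/8) * c := by
    unfold sawA
    apply csSup_le
    · exact ⟨sawFpartial (d-1) m γ n x, ⟨x, hx, rfl⟩⟩
    rintro v ⟨y, hy, rfl⟩
    have hosc := sawFpartial_osc hy hx hγ2 hm2
    rw [← hc'] at hosc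
    have := (abs_le.mp hosc).1
    linarith [(abs_le.mp hosc).2]
  have h5 : c * (1/4) ≤ c * sawG (d-1) m n x :=
    mul_le_mul_of_nonneg_left h3 (le_of_lt hcpos)
  rw [← hc']
  linarith
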